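/- Assume a ≠ b, let L₃ be the orthogonal projection of O onto the symmedian line CL, and assume L₃ ≠ O. Then the inverse point L₃' = inversion O R L₃ satisfies: (i) L₃' = (a² • A − b² • B)/(a² − b²) (the affine combination of A and B with weights a²/(a²−b²) and −b²/(a²−b²)); (ii) L₃' lies on the line AB; (iii) a² · dist L₃' A = b² · dist L₃' B (so L₃' is the center of the Apollonius circle with basic points A, B passing through C); (iv) the line C L₃' is tangent to the circumcircle at C, i.e. the inner product ⟪C − O, L₃' − C⟫ = 0. -/

import Mathlib

open EuclideanGeometry
open scoped RealInnerProductSpace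

noncomputable section

section Aux

variable {E : Type*} [NormedAddCommGroup E] [InnerProductSpace ℝ E]

private lemma inner_comb3 (u v w : E) (p₁ p₂ p₃ q₁ q₂ q₃ : ℝ) :
    ⟪p₁ • u + p₂ • v + p₃ • w, q₁ • u + q₂ • v + q₃ • w⟫ =
      p₁ * q₁ * ⟪u, u⟫ + p₂ * q₂ * ⟪v, v⟫ + p₃ * q₃ * ⟪w, w⟫ +
      (p₁ * q₂ + p₂ * q₁) * ⟪u, v⟫ + (p₁ * q₃ + p₃ * q₁) * ⟪u, w⟫ +
      (p₂ * q₃ + p₃ * q₂) * ⟪v, w⟫ := by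
  simp only [inner_add_left, inner_add_right, real_inner_smul_left, real_inner_smul_right]
  rw [real_inner_comm v u, real_inner_comm w u, real_inner_comm w v]
  ring

end Aux

private lemma span_pair_top (A B C : EuclideanSpace ℝ (Fin 2))
    (h : AffineIndependent ℝ ![A, B, C]) :
    Submodule.span ℝ ({A - C, B - C} : Set (EuclideanSpace ℝ (Fin 2))) = ⊤ := by
  rw [affineIndependent_iff_linearIndependent_vsub ℝ ![A, B, C] 2] at h
  haveI : Nonempty {x : Fin 3 // x ≠ 2} := ⟨⟨0, by decide⟩⟩
  have hcard : Fintype.card {x : Fin 3 // x ≠ 2} = Module.finrank ℝ (EuclideanSpace ℝ (Fin 2)) := by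
    simp [finrank_euclideanSpace_fin]
  have htop := h.span_eq_top_of_card_eq_finrank hcard
  have hsub : Set.range (fun i : {x : Fin 3 // x ≠ 2} =>
      ![A, B, C] ↑i -ᵥ ![A, B, C] 2) ⊆ ({A - C, B - C} : Set (EuclideanSpace ℝ (Fin 2))) := by
    rintro x ⟨⟨i, hi⟩, rfl⟩
    fin_cases i
    · left; simp [vsub_eq_sub]
    · right; simp [vsub_eq_sub]
    · exact absurd rfl hi
  have hle := Submodule.span_mono (R := ℝ) hsub
  rw [htop] at hle
  exact top_le_iff.mp hle

private lemma eq_zero_of_inner_eq (A B C : EuclideanSpace ℝ (Fin 2))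
    (h : AffineIndependent ℝ ![A, B, C]) (x : EuclideanSpace ℝ (Fin 2))
    (h1 : ⟪x, A - C⟫ = 0) (h2 : ⟪x, B - C⟫ = 0) : x = 0 := by
  have hx : x ∈ Submodule.span ℝ ({A - C, B - C} : Set (EuclideanSpace ℝ (Fin 2))) := by
    rw [span_pair_top A B C h]; trivial
  obtain ⟨r, s, hrs⟩ := Submodule.mem_span_pair.mp hx
  have hxx : ⟪x, x⟫ = 0 := by
    nth_rewrite 2 [← hrs]
    rw [inner_add_right, real_inner_smul_right, real_inner_smul_right, h1, h2]
    ring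
  exact inner_self_eq_zero.mp hxx

set_option maxHeartbeats 1000000 in
theorem stmt14 (A B C O L L₃ : EuclideanSpace ℝ (Fin 2)) (R a b c : ℝ)
    (hABC : AffineIndependent ℝ ![A, B, C])
    (hR : 0 < R) (hOA : dist O A = R) (hOB : dist O B = R) (hOC : dist O C = R)
    (ha : a = dist B C) (hb : b = dist C A) (hc : c = dist A B)
    (hab : a ≠ b)
    (hL : L = (a ^ 2 + b ^ 2 + c ^ 2)⁻¹ • (a ^ 2 • A + b ^ 2 • B + c ^ 2 • C))
    (hL₃ : L₃ = EuclideanGeometry.orthogonalProjection (affineSpan ℝ {C, L}) O)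
    (hL₃O : L₃ ≠ O) :
    inversion O R L₃ = (a ^ 2 - b ^ 2)⁻¹ • (a ^ 2 • A - b ^ 2 • B) ∧
    inversion O R L₃ ∈ affineSpan ℝ ({A, B} : Set (EuclideanSpace ℝ (Fin 2))) ∧
    a ^ 2 * dist (inversion O R L₃) A = b ^ 2 * dist (inversion O R L₃) B ∧
    ⟪C - O, inversion O R L₃ - C⟫ = 0 := by
  have hinj := hABC.injective
  have hABne : A ≠ B := by
    intro h
    have h01 : (0 : Fin 3) = 1 := hinj (by simp [h])
    exact absurd h01 (by decide)
  have hBCne : B ≠ C := by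
    intro h
    have h12 : (1 : Fin 3) = 2 := hinj (by simp [h])
    exact absurd h12 (by decide)
  have hCAne : C ≠ A := by
    intro h
    have h20 : (2 : Fin 3) = 0 := hinj (by simp [h])
    exact absurd h20 (by decide)
  have hapos : 0 < a := ha ▸ dist_pos.mpr hBCne
  have hbpos : 0 < b := hb ▸ dist_pos.mpr hCAne
  have hcpos : 0 < c := hc ▸ dist_pos.mpr hABne
  have habs : a ^ 2 - b ^ 2 ≠ 0 := by
    intro h
    exact hab (by nlinarith)
  -- Gram matrix entries
  have hnAO : ‖A - O‖ = R := by rw [← dist_eq_norm, dist_comm]; exact hOA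
  have hnBO : ‖B - O‖ = R := by rw [← dist_eq_norm, dist_comm]; exact hOB
  have hnCO : ‖C - O‖ = R := by rw [← dist_eq_norm, dist_comm]; exact hOC
  have Guu : ⟪A - O, A - O⟫ = R ^ 2 := by rw [real_inner_self_eq_norm_sq, hnAO]
  have Gvv : ⟪B - O, B - O⟫ = R ^ 2 := by rw [real_inner_self_eq_norm_sq, hnBO]
  have Gww : ⟪C - O, C - O⟫ = R ^ 2 := by rw [real_inner_self_eq_norm_sq, hnCO]
  have Guv : ⟪A - O, B - O⟫ = R ^ 2 - c ^ 2 / 2 := by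
    have h1 : ‖(A - O) - (B - O)‖ ^ 2 = ‖A - O‖ ^ 2 - 2 * ⟪A - O, B - O⟫ + ‖B - O‖ ^ 2 :=
      norm_sub_sq_real _ _
    have h2 : (A - O) - (B - O) = A - B := by abel
    rw [h2, ← dist_eq_norm, ← hc, hnAO, hnBO] at h1
    linarith
  have Guw : ⟪A - O, C - O⟫ = R ^ 2 - b ^ 2 / 2 := by
    have h1 : ‖(A - O) - (C - O)‖ ^ 2 = ‖A - O‖ ^ 2 - 2 * ⟪A - O, C - O⟫ + ‖C - O‖ ^ 2 :=
      norm_sub_sq_real _ _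
    have h2 : (A - O) - (C - O) = A - C := by abel
    rw [h2, ← dist_eq_norm, dist_comm, ← hb, hnAO, hnCO] at h1
    linarith
  have Gvw : ⟪B - O, C - O⟫ = R ^ 2 - a ^ 2 / 2 := by
    have h1 : ‖(B - O) - (C - O)‖ ^ 2 = ‖B - O‖ ^ 2 - 2 * ⟪B - O, C - O⟫ + ‖C - O‖ ^ 2 :=
      norm_sub_sq_real _ _
    have h2 : (B - O) - (C - O) = B - C := by abel
    rw [h2, ← dist_eq_norm, ← ha, hnBO, hnCO] at h1
    linarith
  have hAC : A - C = (1 : ℝ) • (A - O) + (0 : ℝ) • (B - O) + (-1 : ℝ) • (C - O) := by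
    module
  have hBC : B - C = (0 : ℝ) • (A - O) + (1 : ℝ) • (B - O) + (-1 : ℝ) • (C - O) := by
    module
  -- the circumcenter constraint
  have hz : (a ^ 2 * (b ^ 2 + c ^ 2 - a ^ 2)) • (A - O)
      + (b ^ 2 * (c ^ 2 + a ^ 2 - b ^ 2)) • (B - O)
      + (c ^ 2 * (a ^ 2 + b ^ 2 - c ^ 2)) • (C - O) = 0 := by
    apply eq_zero_of_inner_eq A B C hABC
    · rw [hAC, inner_comb3, Guu, Gvv, Gww, Guv, Guw, Gvw]; ring
    · rw [hBC, inner_comb3, Guu, Gvv, Gww, Guv, Guw, Gvw]; ring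
  have hP : (2 * (a ^ 2 * b ^ 2) + 2 * (a ^ 2 * c ^ 2) + 2 * (b ^ 2 * c ^ 2)
      - a ^ 4 - b ^ 4 - c ^ 4) * R ^ 2 - a ^ 2 * b ^ 2 * c ^ 2 = 0 := by
    have h0 : ⟪(a ^ 2 * (b ^ 2 + c ^ 2 - a ^ 2)) • (A - O)
        + (b ^ 2 * (c ^ 2 + a ^ 2 - b ^ 2)) • (B - O)
        + (c ^ 2 * (a ^ 2 + b ^ 2 - c ^ 2)) • (C - O),
        (0 : ℝ) • (A - O) + (0 : ℝ) • (B - O) + (1 : ℝ) • (C - O)⟫ = 0 := by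
      rw [hz, inner_zero_left]
    rw [inner_comb3, Guu, Gvv, Gww, Guv, Guw, Gvw] at h0
    linear_combination h0
  have hn : (0:ℝ) < a ^ 2 + b ^ 2 + c ^ 2 := by positivity
  have hab2 : a ^ 2 * b ^ 2 ≠ 0 := by positivity
  -- parametrize L₃ on the line C L
  have hCmem : C ∈ affineSpan ℝ ({C, L} : Set (EuclideanSpace ℝ (Fin 2))) :=
    left_mem_affineSpan_pair ℝ C L
  have hLmem : L ∈ affineSpan ℝ ({C, L} : Set (EuclideanSpace ℝ (Fin 2))) :=
    right_mem_affineSpan_pair ℝ C L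
  have hmem : L₃ ∈ affineSpan ℝ ({C, L} : Set (EuclideanSpace ℝ (Fin 2))) := by
    rw [hL₃]
    exact EuclideanGeometry.orthogonalProjection_mem (s := affineSpan ℝ ({C, L} : Set (EuclideanSpace ℝ (Fin 2)))) O
  have hdirm : L₃ -ᵥ C ∈ vectorSpan ℝ ({C, L} : Set (EuclideanSpace ℝ (Fin 2))) := by
    rw [← direction_affineSpan]
    exact AffineSubspace.vsub_mem_direction hmem hCmem
  obtain ⟨t, ht⟩ := mem_vectorSpan_pair_rev.mp hdirm
  have e1 : L₃ - C = t • (L - C) := by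
    simpa [vsub_eq_sub] using ht.symm
  have hperp0 : O -ᵥ L₃ ∈ (affineSpan ℝ ({C, L} : Set (EuclideanSpace ℝ (Fin 2)))).directionᗮ := by
    have h0 := EuclideanGeometry.orthogonalProjection_vsub_mem_direction_orthogonal
      (affineSpan ℝ ({C, L} : Set (EuclideanSpace ℝ (Fin 2)))) O
    have h1 := Submodule.neg_mem _ h0
    rw [neg_vsub_eq_vsub_rev] at h1
    rw [hL₃]; exact h1
  have hperp : ⟪L - C, O - L₃⟫ = 0 := by
    have hLCd : L -ᵥ C ∈ (affineSpan ℝ ({C, L} : Set (EuclideanSpace ℝ (Fin 2)))).direction :=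
      AffineSubspace.vsub_mem_direction hLmem hCmem
    have h0 := (Submodule.mem_orthogonal _ _).mp hperp0 _ hLCd
    simpa [vsub_eq_sub] using h0
  -- scalar form of the line C L
  have hLn : (a ^ 2 + b ^ 2 + c ^ 2) • L = a ^ 2 • A + b ^ 2 • B + c ^ 2 • C := by
    rw [hL, smul_smul, mul_inv_cancel₀ hn.ne', one_smul]
  have hLc : (a ^ 2 + b ^ 2 + c ^ 2) • (L - C)
      = (a ^ 2) • (A - O) + (b ^ 2) • (B - O) + (-(a ^ 2 + b ^ 2)) • (C - O) := by
    linear_combination (norm := module) hLn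
  have h2 : (-(t * a ^ 2)) • (A - O) + (-(t * b ^ 2)) • (B - O)
      + (t * (a ^ 2 + b ^ 2) - (a ^ 2 + b ^ 2 + c ^ 2)) • (C - O)
      = (a ^ 2 + b ^ 2 + c ^ 2) • (O - L₃) := by
    linear_combination (norm := module) (t : ℝ) • hLc + (a ^ 2 + b ^ 2 + c ^ 2 : ℝ) • e1
  have hexp : ⟪(a ^ 2) • (A - O) + (b ^ 2) • (B - O) + (-(a ^ 2 + b ^ 2)) • (C - O),
      (-(t * a ^ 2)) • (A - O) + (-(t * b ^ 2)) • (B - O)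
      + (t * (a ^ 2 + b ^ 2) - (a ^ 2 + b ^ 2 + c ^ 2)) • (C - O)⟫ = 0 := by
    rw [← hLc, h2, real_inner_smul_left, real_inner_smul_right, hperp, mul_zero, mul_zero]
  rw [inner_comb3, Guu, Gvv, Gww, Guv, Guw, Gvw] at hexp
  have htT : t * (2 * a ^ 2 + 2 * b ^ 2 - c ^ 2) = a ^ 2 + b ^ 2 + c ^ 2 := by
    apply mul_left_cancel₀ hab2
    linear_combination -hexp
  have hT : (2 * a ^ 2 + 2 * b ^ 2 - c ^ 2) ≠ 0 := by
    intro h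
    rw [h, mul_zero] at htT
    linarith
  -- the vector from O to L₃
  have e2 : (2 * a ^ 2 + 2 * b ^ 2 - c ^ 2) • (L₃ - C)
      = (a ^ 2 + b ^ 2 + c ^ 2) • (L - C) := by
    rw [e1, smul_smul, mul_comm (2 * a ^ 2 + 2 * b ^ 2 - c ^ 2) t, htT]
  have he : (2 * a ^ 2 + 2 * b ^ 2 - c ^ 2) • (L₃ - O)
      = (a ^ 2) • (A - O) + (b ^ 2) • (B - O) + (a ^ 2 + b ^ 2 - c ^ 2) • (C - O) := by
    linear_combination (norm := module) e2 + hLc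
  -- squared norm of that vector
  have hQ : ⟪(a ^ 2) • (A - O) + (b ^ 2) • (B - O) + (a ^ 2 + b ^ 2 - c ^ 2) • (C - O),
      (a ^ 2) • (A - O) + (b ^ 2) • (B - O) + (a ^ 2 + b ^ 2 - c ^ 2) • (C - O)⟫
      = (2 * a ^ 2 + 2 * b ^ 2 - c ^ 2) ^ 2 * R ^ 2
        - a ^ 2 * b ^ 2 * (2 * a ^ 2 + 2 * b ^ 2 - c ^ 2) := by
    rw [inner_comb3, Guu, Gvv, Gww, Guv, Guw, Gvw]; ring
  have hk : ‖L₃ - O‖ ≠ 0 := by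
    rw [norm_ne_zero_iff, sub_ne_zero]; exact hL₃O
  have h5 : ⟪(2 * a ^ 2 + 2 * b ^ 2 - c ^ 2) • (L₃ - O),
      (2 * a ^ 2 + 2 * b ^ 2 - c ^ 2) • (L₃ - O)⟫
      = (2 * a ^ 2 + 2 * b ^ 2 - c ^ 2) ^ 2 * R ^ 2
        - a ^ 2 * b ^ 2 * (2 * a ^ 2 + 2 * b ^ 2 - c ^ 2) := by
    rw [he, hQ]
  rw [real_inner_smul_left, real_inner_smul_right, real_inner_self_eq_norm_sq] at h5
  have hknorm : (2 * a ^ 2 + 2 * b ^ 2 - c ^ 2) ^ 2 * ‖L₃ - O‖ ^ 2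
      = (2 * a ^ 2 + 2 * b ^ 2 - c ^ 2) ^ 2 * R ^ 2
        - a ^ 2 * b ^ 2 * (2 * a ^ 2 + 2 * b ^ 2 - c ^ 2) := by
    linear_combination h5
  set Qv : ℝ := (2 * a ^ 2 + 2 * b ^ 2 - c ^ 2) ^ 2 * R ^ 2
        - a ^ 2 * b ^ 2 * (2 * a ^ 2 + 2 * b ^ 2 - c ^ 2) with hQv
  have hQvne : Qv ≠ 0 := by
    rw [← hknorm]
    exact mul_ne_zero (pow_ne_zero 2 hT) (pow_ne_zero 2 hk)
  -- key vector identity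
  have hV : (R ^ 2 * (a ^ 2 - b ^ 2) * (2 * a ^ 2 + 2 * b ^ 2 - c ^ 2) * a ^ 2 - Qv * a ^ 2)
        • (A - O)
      + (R ^ 2 * (a ^ 2 - b ^ 2) * (2 * a ^ 2 + 2 * b ^ 2 - c ^ 2) * b ^ 2 + Qv * b ^ 2)
        • (B - O)
      + (R ^ 2 * (a ^ 2 - b ^ 2) * (2 * a ^ 2 + 2 * b ^ 2 - c ^ 2) * (a ^ 2 + b ^ 2 - c ^ 2))
        • (C - O) = 0 := by
    apply eq_zero_of_inner_eq A B C hABC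
    · rw [hAC, inner_comb3, Guu, Gvv, Gww, Guv, Guw, Gvw, hQv]
      linear_combination (-(a ^ 2 * b ^ 2) - b ^ 4 + b ^ 2 * c ^ 2 / 2) * hP
    · rw [hBC, inner_comb3, Guu, Gvv, Gww, Guv, Guw, Gvw, hQv]
      linear_combination (a ^ 4 + a ^ 2 * b ^ 2 - a ^ 2 * c ^ 2 / 2) * hP
  have hKV : (R ^ 2 * (a ^ 2 - b ^ 2) * (2 * a ^ 2 + 2 * b ^ 2 - c ^ 2)) •
      ((a ^ 2) • (A - O) + (b ^ 2) • (B - O) + (a ^ 2 + b ^ 2 - c ^ 2) • (C - O))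
      = Qv • ((a ^ 2) • (A - O) - (b ^ 2) • (B - O)) := by
    linear_combination (norm := module) hV
  -- the target point D
  set D : EuclideanSpace ℝ (Fin 2) := (a ^ 2 - b ^ 2)⁻¹ • (a ^ 2 • A - b ^ 2 • B) with hDdef
  have hD0 : (a ^ 2 - b ^ 2) • D = a ^ 2 • A - b ^ 2 • B := by
    rw [hDdef, smul_smul, mul_inv_cancel₀ habs, one_smul]
  have hDvec : (a ^ 2) • (A - O) - (b ^ 2) • (B - O) = (a ^ 2 - b ^ 2) • (D - O) := by
    linear_combination (norm := module) (-1 : ℝ) • hD0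
  -- part (i)
  have hscal : (a ^ 2 - b ^ 2) * Qv * (R / ‖L₃ - O‖) ^ 2
      = R ^ 2 * (a ^ 2 - b ^ 2) * (2 * a ^ 2 + 2 * b ^ 2 - c ^ 2)
        * (2 * a ^ 2 + 2 * b ^ 2 - c ^ 2) := by
    rw [div_pow]
    rw [← hknorm]
    field_simp
  have hchain : ((a ^ 2 - b ^ 2) * Qv) • ((R / ‖L₃ - O‖) ^ 2 • (L₃ - O))
      = ((a ^ 2 - b ^ 2) * Qv) • (D - O) := by
    calc ((a ^ 2 - b ^ 2) * Qv) • ((R / ‖L₃ - O‖) ^ 2 • (L₃ - O))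
        = ((a ^ 2 - b ^ 2) * Qv * (R / ‖L₃ - O‖) ^ 2) • (L₃ - O) := by rw [smul_smul]
      _ = (R ^ 2 * (a ^ 2 - b ^ 2) * (2 * a ^ 2 + 2 * b ^ 2 - c ^ 2)
            * (2 * a ^ 2 + 2 * b ^ 2 - c ^ 2)) • (L₃ - O) := by rw [hscal]
      _ = (R ^ 2 * (a ^ 2 - b ^ 2) * (2 * a ^ 2 + 2 * b ^ 2 - c ^ 2)) •
            ((2 * a ^ 2 + 2 * b ^ 2 - c ^ 2) • (L₃ - O)) := by rw [smul_smul]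
      _ = (R ^ 2 * (a ^ 2 - b ^ 2) * (2 * a ^ 2 + 2 * b ^ 2 - c ^ 2)) •
            ((a ^ 2) • (A - O) + (b ^ 2) • (B - O) + (a ^ 2 + b ^ 2 - c ^ 2) • (C - O)) := by
          rw [he]
      _ = Qv • ((a ^ 2) • (A - O) - (b ^ 2) • (B - O)) := hKV
      _ = Qv • ((a ^ 2 - b ^ 2) • (D - O)) := by rw [hDvec]
      _ = ((a ^ 2 - b ^ 2) * Qv) • (D - O) := by rw [smul_smul, mul_comm]
  have key : (R / ‖L₃ - O‖) ^ 2 • (L₃ - O) = D - O :=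
    smul_right_injective (EuclideanSpace ℝ (Fin 2)) (mul_ne_zero habs hQvne) hchain
  have hmain : inversion O R L₃ = D := by
    simp only [EuclideanGeometry.inversion, vsub_eq_sub, vadd_eq_add, dist_eq_norm]
    rw [key]
    abel
  refine ⟨hmain, ?_, ?_, ?_⟩
  · -- part (ii)
    rw [hmain]
    have hDlm : D = AffineMap.lineMap A B (-(b ^ 2) / (a ^ 2 - b ^ 2)) := by
      rw [AffineMap.lineMap_apply, vsub_eq_sub, vadd_eq_add, hDdef]
      match_scalars <;> field_simp <;> ring
    rw [hDlm]
    exact AffineMap.lineMap_mem_affineSpan_pair _ _ _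
  · -- part (iii)
    rw [hmain]
    have hDA : D - A = (b ^ 2 / (a ^ 2 - b ^ 2)) • (A - B) := by
      rw [hDdef]; match_scalars <;> (field_simp; try ring)
    have hDB : D - B = (a ^ 2 / (a ^ 2 - b ^ 2)) • (A - B) := by
      rw [hDdef]; match_scalars <;> (field_simp; try ring)
    have hABn : ‖A - B‖ = c := by rw [← dist_eq_norm]; exact hc.symm
    rw [dist_eq_norm, dist_eq_norm, hDA, hDB, norm_smul, norm_smul, hABn,
      Real.norm_eq_abs, Real.norm_eq_abs, abs_div, abs_div,
      abs_of_nonneg (sq_nonneg a), abs_of_nonneg (sq_nonneg b)]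
    ring
  · -- part (iv)
    rw [hmain]
    have hCO : C - O = (0 : ℝ) • (A - O) + (0 : ℝ) • (B - O) + (1 : ℝ) • (C - O) := by
      module
    have hDC : (a ^ 2 - b ^ 2) • (D - C)
        = (a ^ 2) • (A - O) + (-(b ^ 2)) • (B - O) + (-(a ^ 2 - b ^ 2)) • (C - O) := by
      linear_combination (norm := module) hD0
    have h4 : ⟪(0 : ℝ) • (A - O) + (0 : ℝ) • (B - O) + (1 : ℝ) • (C - O),
        (a ^ 2) • (A - O) + (-(b ^ 2)) • (B - O) + (-(a ^ 2 - b ^ 2)) • (C - O)⟫ = 0 := by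
      rw [inner_comb3, Guu, Gvv, Gww, Guv, Guw, Gvw]; ring
    rw [← hDC, ← hCO, real_inner_smul_right] at h4
    rcases mul_eq_zero.mp h4 with h | h
    · exact absurd h habs
    · exact h
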